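/- True count theorem (A. J. M'Hall): Let 1 ≤ n < N. Then the average of the true count after removing n cards, taken over all n-element subsets of the deck, equals the true count before removing: (1 / binom(N,n)) · ∑_{S ⊆ α, |S| = n} T_S = T. Equivalently, ∑_{S ∈ powersetCard n α} T_S = binom(N,n) · T. -/

import Mathlib

/-- **True count theorem (A. J. M'Hall).**
A deck is a finite set `α` of `N = Fintype.card α` cards with weight function `c : α → ℝ`.
The running count is `R = -∑ a, c a` and the true count is `T = R / N`.
For a subset `S` of cards removed, the true count after removing `S` is
`T_S = -(∑ a ∈ Sᶜ, c a) / (N - |S|)`.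
For `1 ≤ n < N`, the sum of `T_S` over all `n`-element subsets `S` equals
`binom(N, n) · T`; i.e. the average of the true count after removing `n` cards equals
the true count before removing them. -/
theorem true_count_theorem {α : Type*} [Fintype α] [DecidableEq α]
    (c : α → ℝ) (n : ℕ) (hn : 1 ≤ n) (hnN : n < Fintype.card α) :
    ∑ S ∈ Finset.powersetCard n (Finset.univ : Finset α),
        (-(∑ a ∈ Finset.univ \ S, c a) / ((Fintype.card α : ℝ) - n))
      = ((Fintype.card α).choose n : ℝ) *
          (-(∑ a, c a) / (Fintype.card α : ℝ)) := by
  classical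
  set N := Fintype.card α with hN
  have hNpos : 0 < N := lt_of_le_of_lt (Nat.zero_le n) hnN
  have hNn : (N : ℝ) - n ≠ 0 := by
    have : (n : ℝ) < N := by exact_mod_cast hnN
    linarith
  have hNne : (N : ℝ) ≠ 0 := by positivity
  -- main double-sum computation
  have key : ∑ S ∈ Finset.powersetCard n (Finset.univ : Finset α),
      (∑ a ∈ Finset.univ \ S, c a) = ((N - 1).choose n : ℝ) * ∑ a, c a := by
    have swap : ∑ S ∈ Finset.powersetCard n (Finset.univ : Finset α),
        (∑ a ∈ Finset.univ \ S, c a)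
        = ∑ a : α, ∑ S ∈ (Finset.powersetCard n (Finset.univ : Finset α)).filter
            (fun S => a ∉ S), c a := by
      rw [Finset.sum_comm']
      intro S a
      simp [Finset.mem_sdiff, and_comm]
    rw [swap]
    have hcard : ∀ a : α, ((Finset.powersetCard n (Finset.univ : Finset α)).filter
        (fun S => a ∉ S)).card = (N - 1).choose n := by
      intro a
      have : (Finset.powersetCard n (Finset.univ : Finset α)).filter (fun S => a ∉ S)
          = Finset.powersetCard n ((Finset.univ : Finset α).erase a) := by
        ext S
        simp only [Finset.mem_filter, Finset.mem_powersetCard, Finset.subset_erase]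
        tauto
      rw [this, Finset.card_powersetCard, Finset.card_erase_of_mem (Finset.mem_univ a),
        Finset.card_univ]
    calc ∑ a : α, ∑ S ∈ (Finset.powersetCard n (Finset.univ : Finset α)).filter
            (fun S => a ∉ S), c a
        = ∑ a : α, ((N - 1).choose n : ℝ) * c a := by
          apply Finset.sum_congr rfl
          intro a _
          rw [Finset.sum_const, hcard a, nsmul_eq_mul]
      _ = ((N - 1).choose n : ℝ) * ∑ a, c a := by rw [Finset.mul_sum]
  have sumdiv : ∑ S ∈ Finset.powersetCard n (Finset.univ : Finset α),
      (-(∑ a ∈ Finset.univ \ S, c a) / ((N : ℝ) - n))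
      = -(((N - 1).choose n : ℝ) * ∑ a, c a) / ((N : ℝ) - n) := by
    rw [← Finset.sum_div]
    rw [show (∑ S ∈ Finset.powersetCard n (Finset.univ : Finset α),
        -(∑ a ∈ Finset.univ \ S, c a)) = -(∑ S ∈ Finset.powersetCard n (Finset.univ : Finset α),
        (∑ a ∈ Finset.univ \ S, c a)) from by rw [Finset.sum_neg_distrib], key]
  rw [sumdiv]
  -- the binomial identity: (N-1).choose n * N = N.choose n * (N - n)
  have hid : ((N - 1).choose n : ℝ) * N = (N.choose n : ℝ) * ((N : ℝ) - n) := by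
    have h1 : (N - 1).choose n * (N - 1 + 1) = (N - 1 + 1).choose n * (N - 1 + 1 - n) :=
      Nat.choose_mul_succ_eq (N - 1) n
    have h2 : N - 1 + 1 = N := Nat.succ_pred_eq_of_pos hNpos
    rw [h2] at h1
    have h3 : ((N : ℝ) - n) = ((N - n : ℕ) : ℝ) := by
      rw [Nat.cast_sub hnN.le]
    rw [h3]
    exact_mod_cast h1
  field_simp
  linear_combination (-(∑ a, c a)) * hid
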